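/- Let X = (X_1, X_2, ...) be an exchangeable sequence of S-valued random variables for a countable set S. Then for every s ∈ S, almost surely the set {i : X_i = s} is either empty, a singleton, or infinite. -/
import Mathlib


open MeasureTheory

lemma exists_finite_support_perm_image (n : ℕ) : ∀ (F G : Finset ℕ), F.card = n → G.card = n →
    ∃ σ : Equiv.Perm ℕ, {i | σ i ≠ i}.Finite ∧ σ '' ↑F = ↑G := by
  induction n with
  | zero =>
    intro F G hF hG
    refine ⟨Equiv.refl ℕ, by simp, ?_⟩
    simp [Finset.card_eq_zero.mp hF, Finset.card_eq_zero.mp hG]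
  | succ n ih =>
    intro F G hF hG
    obtain ⟨a, ha⟩ := Finset.card_pos.mp (by omega : 0 < F.card)
    obtain ⟨b, hb⟩ := Finset.card_pos.mp (by omega : 0 < G.card)
    obtain ⟨σ', hfin, himg⟩ := ih (F.erase a) (G.erase b)
      (by rw [Finset.card_erase_of_mem ha]; omega)
      (by rw [Finset.card_erase_of_mem hb]; omega)
    have hna : σ' a ∉ (G.erase b : Set ℕ) := by
      rw [← himg]
      rintro ⟨c, hc, hc'⟩
      exact (Finset.notMem_erase a F) (by rwa [σ'.injective hc'] at hc)
    refine ⟨σ'.trans (Equiv.swap (σ' a) b), ?_, ?_⟩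
    · apply Set.Finite.subset (hfin.union (Set.Finite.insert (σ' a) (Set.finite_singleton b)))
      intro i hi
      by_contra hcon
      simp only [Set.mem_union, Set.mem_insert_iff, Set.mem_singleton_iff, not_or,
        Set.mem_setOf_eq, not_not] at hcon
      obtain ⟨h1, h2, h3⟩ := hcon
      apply hi
      simp only [Set.mem_setOf_eq, Equiv.trans_apply, h1, not_not]
      exact Equiv.swap_apply_of_ne_of_ne h2 h3
    · have hFi : (F : Set ℕ) = insert a ((F.erase a : Finset ℕ) : Set ℕ) := by
        rw [← Finset.coe_insert, Finset.insert_erase ha]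
      have hGi : (G : Set ℕ) = insert b ((G.erase b : Finset ℕ) : Set ℕ) := by
        rw [← Finset.coe_insert, Finset.insert_erase hb]
      have : (σ'.trans (Equiv.swap (σ' a) b)) '' ↑F
          = Equiv.swap (σ' a) b '' (σ' '' ↑F) := by
        rw [Set.image_image]; rfl
      rw [this, hFi, Set.image_insert_eq, himg, Set.image_insert_eq,
        Equiv.swap_apply_left, hGi]
      congr 1
      have hfix : ∀ x ∈ (G.erase b : Set ℕ), Equiv.swap (σ' a) b x = x := by
        intro x hx
        exact Equiv.swap_apply_of_ne_of_ne (fun h => hna (h ▸ hx))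
          (Finset.ne_of_mem_erase hx)
      rw [Set.image_congr hfix]; exact Set.image_id _

/-- For an infinite exchangeable sequence of random variables with values
in a countable set `S`, for every `s ∈ S`, almost surely the set of indices `i` with
`X i = s` is empty, a singleton, or infinite. -/
theorem exchangeable_occurrence_trichotomy
    {Ω S : Type*} [MeasurableSpace Ω] [Countable S] [MeasurableSpace S]
    [MeasurableSingletonClass S]
    (μ : Measure Ω) [IsProbabilityMeasure μ]
    (X : ℕ → Ω → S) (hmeas : ∀ i, Measurable (X i))
    (hexch : ∀ σ : Equiv.Perm ℕ, {i | σ i ≠ i}.Finite →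
      μ.map (fun ω => fun i => X (σ i) ω) = μ.map (fun ω => fun i => X i ω)) :
    ∀ s : S, ∀ᵐ ω ∂μ,
      ({i : ℕ | X i ω = s} = ∅) ∨ (∃ j : ℕ, {i : ℕ | X i ω = s} = {j}) ∨
        {i : ℕ | X i ω = s}.Infinite := by
  intro s
  have hXmeas : Measurable (fun ω => fun i => X i ω) := measurable_pi_lambda _ hmeas
  set ν : Measure (ℕ → S) := μ.map (fun ω => fun i => X i ω) with hνdef
  have hνprob : IsProbabilityMeasure ν := Measure.isProbabilityMeasure_map hXmeas.aemeasurable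
  set A : Finset ℕ → Set (ℕ → S) := fun F => {y | {i | y i = s} = ↑F} with hAdef
  have hAmem : ∀ (F : Finset ℕ) (y : ℕ → S), y ∈ A F ↔ ∀ i, (y i = s ↔ i ∈ F) := by
    intro F y
    simp only [hAdef, Set.mem_setOf_eq, Set.ext_iff, Finset.mem_coe]
  have hAmeas : ∀ F, MeasurableSet (A F) := by
    intro F
    have : A F = ⋂ i, {y : ℕ → S | y i = s ↔ i ∈ F} := by
      ext y
      simp only [Set.mem_iInter, Set.mem_setOf_eq]
      exact hAmem F y
    rw [this]
    have hbase : ∀ i : ℕ, MeasurableSet {y : ℕ → S | y i = s} := by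
      intro i
      have h1 : {y : ℕ → S | y i = s} = (fun y : ℕ → S => y i) ⁻¹' {s} := rfl
      rw [h1]
      exact measurable_pi_apply i (measurableSet_singleton s)
    refine MeasurableSet.iInter fun i => ?_
    by_cases h : i ∈ F
    · simp only [h, iff_true]
      exact hbase i
    · simp only [h, iff_false]
      exact (hbase i).compl
  -- invariance
  have hinv : ∀ F G : Finset ℕ, F.card = G.card → ν (A F) = ν (A G) := by
    intro F G hcard
    obtain ⟨σ, hσfin, hσimg⟩ := exists_finite_support_perm_image F.card G F hcard.symm rfl
    have hΦmeas : Measurable (fun y : ℕ → S => fun i => y (σ i)) :=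
      measurable_pi_lambda _ fun i => measurable_pi_apply (σ i)
    have hmap : ν.map (fun y : ℕ → S => fun i => y (σ i)) = ν := by
      rw [hνdef, Measure.map_map hΦmeas hXmeas]
      exact hexch σ hσfin
    have key : ∀ j, σ.symm j ∈ G ↔ j ∈ F := by
      intro j
      rw [← Finset.mem_coe (a := j), ← hσimg, Set.mem_image_equiv, Finset.mem_coe]
    have hpre : (fun y : ℕ → S => fun i => y (σ i)) ⁻¹' (A G) = A F := by
      ext y
      simp only [Set.mem_preimage, hAmem]
      constructor
      · intro h j
        have h2 := h (σ.symm j)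
        simp only [Equiv.apply_symm_apply] at h2
        rw [h2, key]
      · intro h i
        rw [h (σ i), ← key (σ i), Equiv.symm_apply_apply]
    calc ν (A F) = ν ((fun y : ℕ → S => fun i => y (σ i)) ⁻¹' (A G)) := by rw [hpre]
    _ = ν.map (fun y : ℕ → S => fun i => y (σ i)) (A G) :=
        (Measure.map_apply hΦmeas (hAmeas G)).symm
    _ = ν (A G) := by rw [hmap]
  -- each A F with F nonempty is null
  have hzero : ∀ F : Finset ℕ, F.Nonempty → ν (A F) = 0 := by
    intro F hFne
    set k := F.card with hk
    have hkpos : 0 < k := Finset.card_pos.mpr hFne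
    set G : ℕ → Finset ℕ := fun n =>
      (Finset.range k).map ⟨fun i => n * k + i, add_right_injective (n * k)⟩ with hGdef
    have hGcard : ∀ n, (G n).card = k := fun n => by
      simp [hGdef]
    have hGne : ∀ n m, n ≠ m → G n ≠ G m := by
      intro n m hnm hEq
      have h1 : n * k ∈ G n := by
        simp only [hGdef, Finset.mem_map, Finset.mem_range, Function.Embedding.coeFn_mk]
        exact ⟨0, hkpos, by omega⟩
      rw [hEq] at h1
      simp only [hGdef, Finset.mem_map, Finset.mem_range, Function.Embedding.coeFn_mk] at h1
      obtain ⟨i, hi, hi'⟩ := h1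
      rcases Nat.lt_or_ge n m with h | h
      · nlinarith
      · have : m < n := by omega
        nlinarith
    have hdisj : Pairwise (Function.onFun Disjoint fun n => A (G n)) := by
      intro n m hnm
      refine Set.disjoint_left.mpr fun y hyn hym => ?_
      apply hGne n m hnm
      apply Finset.coe_injective
      rw [← hyn, ← hym]
    have hsum : ∑' n : ℕ, ν (A (G n)) = ν (⋃ n, A (G n)) :=
      (measure_iUnion hdisj fun n => hAmeas (G n)).symm
    have hconst : ∀ n, ν (A (G n)) = ν (A F) := fun n => hinv (G n) F (by rw [hGcard n, hk])
    by_contra hne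
    have : (∑' _ : ℕ, ν (A F)) = ⊤ := ENNReal.tsum_const_eq_top_of_ne_zero hne
    rw [tsum_congr hconst, this] at hsum
    exact (measure_lt_top ν _).ne hsum.symm
  -- pull back to μ
  have hbad : μ {ω | ({i | X i ω = s}).Finite ∧ ({i | X i ω = s}).Nonempty} = 0 := by
    have hsub : {ω | ({i | X i ω = s}).Finite ∧ ({i | X i ω = s}).Nonempty}
        ⊆ ⋃ F : Finset ℕ, ⋃ _ : F.Nonempty, (fun ω => fun i => X i ω) ⁻¹' A F := by
      rintro ω ⟨hfin, hne⟩
      refine Set.mem_iUnion.mpr ⟨hfin.toFinset, Set.mem_iUnion.mpr ⟨?_, ?_⟩⟩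
      · rwa [← Set.Finite.toFinset_nonempty hfin] at hne
      · simp only [Set.mem_preimage, hAdef, Set.mem_setOf_eq, Set.Finite.coe_toFinset]
    refine measure_mono_null hsub (measure_iUnion_null fun F => measure_iUnion_null fun hF => ?_)
    rw [← Measure.map_apply hXmeas (hAmeas F), ← hνdef]
    exact hzero F hF
  rw [ae_iff]
  refine measure_mono_null ?_ hbad
  intro ω hω
  simp only [Set.mem_setOf_eq, not_or] at hω
  obtain ⟨h1, _, h3⟩ := hω
  exact ⟨Set.not_infinite.mp h3, Set.nonempty_iff_ne_empty.mpr h1⟩
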